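/- arXiv:math/0510215 — 2 statements merged into one kernel-verified Lean document; each statement's English description precedes it below -/
import Mathlib

section
/- Let G be a group with elements σ, ρ, B, and A₁, A₂, A₃, A_{2g+1} satisfying: σ² = 1, ρ central with ρ² = 1, σ A_i σ = A_i^{-1} for all i, σBσ = ρB, B A_i B^{-1} = A_{i+1} (indices mod 2g+2), and the braid relations A_i A_{i+1} A_i = A_{i+1} A_i A_{i+1}. Then for N = σ A_{2g+1}^{-1} A₁ A₂ A₁^{-1} B A_{2g+1}^{-1} one has N² = A_{2g+1} (A₂ A₃)(A₁^{-1} A₂^{-1}) B² A_{2g+1}^{-1} ρ. -/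
theorem stmt_13 {G : Type*} [Group G] (g : ℕ) (hg : 2 ≤ g)
    (σ ρ B : G) (A : ZMod (2 * g + 2) → G)
    (hσ : σ ^ 2 = 1) (hρc : ρ ∈ Subgroup.center G) (hρ2 : ρ ^ 2 = 1)
    (hσA : ∀ i, σ * A i * σ = (A i)⁻¹)
    (hσB : σ * B * σ = ρ * B)
    (hconj : ∀ i, B * A i * B⁻¹ = A (i + 1))
    (hcomm : ∀ i j : ZMod (2 * g + 2), i ≠ j → i ≠ j + 1 → j ≠ i + 1 → A i * A j = A j * A i)
    (hbraid : ∀ i, A i * A (i + 1) * A i = A (i + 1) * A i * A (i + 1))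
    (N : G)
    (hN : N = σ * (A (2 * g + 1))⁻¹ * A 1 * A 2 * (A 1)⁻¹ * B * (A (2 * g + 1))⁻¹) :
    N ^ 2 = A (2 * g + 1) * (A 2 * A 3) * ((A 1)⁻¹ * (A 2)⁻¹) * B ^ 2 * (A (2 * g + 1))⁻¹ * ρ := by
  have hσσ : σ * σ = 1 := by rw [← sq]; exact hσ
  have hρ1 : ∀ x : G, x * ρ = ρ * x := fun x => Subgroup.mem_center_iff.mp hρc x
  have hρmove : ∀ x c : G, x * (ρ * c) = ρ * (x * c) := fun x c => by
    rw [← mul_assoc, hρ1, mul_assoc]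
  have sA : ∀ i (c : G), σ * (A i * c) = (A i)⁻¹ * (σ * c) := by
    intro i c
    have h : σ * A i = (A i)⁻¹ * σ := by
      calc σ * A i = σ * A i * σ * σ := by rw [mul_assoc (σ * A i), hσσ, mul_one]
      _ = (A i)⁻¹ * σ := by rw [hσA i]
    rw [← mul_assoc, h, mul_assoc]
  have sAi : ∀ i (c : G), σ * ((A i)⁻¹ * c) = A i * (σ * c) := by
    intro i c
    have h : σ * (A i)⁻¹ = A i * σ := by
      rw [← hσA i, ← mul_assoc, ← mul_assoc, hσσ, one_mul]
    rw [← mul_assoc, h, mul_assoc]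
  have sB : ∀ c : G, σ * (B * c) = ρ * (B * (σ * c)) := by
    intro c
    have h : σ * B = ρ * B * σ := by
      calc σ * B = σ * B * σ * σ := by rw [mul_assoc (σ * B), hσσ, mul_one]
      _ = ρ * B * σ := by rw [hσB]
    rw [← mul_assoc, h, mul_assoc, mul_assoc]
  have i12 : ((1 : ZMod (2 * g + 2)) + 1) = 2 := by norm_num
  have i23 : ((2 : ZMod (2 * g + 2)) + 1) = 3 := by norm_num
  have i34 : ((3 : ZMod (2 * g + 2)) + 1) = 4 := by norm_num
  have hne : ∀ a b : ℕ, a < 2 * g + 2 → b < 2 * g + 2 → a ≠ b →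
      (a : ZMod (2 * g + 2)) ≠ (b : ZMod (2 * g + 2)) := by
    intro a b ha hb hab h
    haveI : NeZero (2 * g + 2) := ⟨by omega⟩
    apply hab
    have := congrArg ZMod.val h
    rwa [ZMod.val_cast_of_lt ha, ZMod.val_cast_of_lt hb] at this
  have ne13 : (1 : ZMod (2 * g + 2)) ≠ 3 := by
    have := hne 1 3 (by omega) (by omega) (by omega); exact_mod_cast this
  have ne14 : (1 : ZMod (2 * g + 2)) ≠ 4 := by
    have := hne 1 4 (by omega) (by omega) (by omega); exact_mod_cast this
  have ne32 : (3 : ZMod (2 * g + 2)) ≠ 2 := by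
    have := hne 3 2 (by omega) (by omega) (by omega); exact_mod_cast this
  have hco : A 1 * A 3 = A 3 * A 1 := by
    apply hcomm 1 3 ne13 (by rw [i34]; exact ne14) (by rw [i12]; exact ne32)
  have c13 : ∀ c : G, (A 1)⁻¹ * (A 3 * c) = A 3 * ((A 1)⁻¹ * c) := by
    intro c
    have hcm : Commute (A 1) (A 3) := hco
    rw [← mul_assoc, hcm.inv_left.eq, mul_assoc]
  have hb1 := hbraid 1
  rw [i12] at hb1
  have e : A 1 * A 2 = A 2 * A 1 * A 2 * (A 1)⁻¹ := by rw [← hb1]; group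
  have C : ∀ c : G, (A 1)⁻¹ * ((A 2)⁻¹ * (A 1 * (A 2 * c))) = A 2 * ((A 1)⁻¹ * c) := by
    intro c
    apply mul_left_cancel (a := A 2 * A 1)
    calc (A 2 * A 1) * ((A 1)⁻¹ * ((A 2)⁻¹ * (A 1 * (A 2 * c)))) = (A 1 * A 2) * c := by group
    _ = (A 2 * A 1 * A 2 * (A 1)⁻¹) * c := by rw [e]
    _ = (A 2 * A 1) * (A 2 * ((A 1)⁻¹ * c)) := by group
  have hc1 := hconj 1
  rw [i12] at hc1
  have hc2 := hconj 2
  rw [i23] at hc2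
  have bA1 : ∀ c : G, B * (A 1 * c) = A 2 * (B * c) := by
    intro c
    have h : B * A 1 = A 2 * B := by rw [← hc1]; group
    rw [← mul_assoc, h, mul_assoc]
  have bA2 : ∀ c : G, B * (A 2 * c) = A 3 * (B * c) := by
    intro c
    have h : B * A 2 = A 3 * B := by rw [← hc2]; group
    rw [← mul_assoc, h, mul_assoc]
  have bAi1 : ∀ c : G, B * ((A 1)⁻¹ * c) = (A 2)⁻¹ * (B * c) := by
    intro c
    have h : B * (A 1)⁻¹ = (A 2)⁻¹ * B := by rw [← hc1]; group
    rw [← mul_assoc, h, mul_assoc]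
  rw [hN, pow_two]
  rw [show (σ * (A (2 * g + 1))⁻¹ * A 1 * A 2 * (A 1)⁻¹ * B * (A (2 * g + 1))⁻¹) *
      (σ * (A (2 * g + 1))⁻¹ * A 1 * A 2 * (A 1)⁻¹ * B * (A (2 * g + 1))⁻¹) =
      (σ * ((A (2 * g + 1))⁻¹ * (A 1 * (A 2 * ((A 1)⁻¹ * (B * ((A (2 * g + 1))⁻¹ * σ))))))) *
      ((A (2 * g + 1))⁻¹ * (A 1 * (A 2 * ((A 1)⁻¹ * (B * (A (2 * g + 1))⁻¹))))) from by group]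
  rw [show σ * ((A (2 * g + 1))⁻¹ * (A 1 * (A 2 * ((A 1)⁻¹ * (B * ((A (2 * g + 1))⁻¹ * σ)))))) =
      ρ * (A (2 * g + 1) * ((A 1)⁻¹ * ((A 2)⁻¹ * (A 1 * (B * A (2 * g + 1)))))) from by
    simp only [sA, sAi, sB, hρmove, hσσ, mul_one]]
  simp only [mul_assoc, pow_two, hρmove, hρ1, mul_inv_cancel_left, inv_mul_cancel_left,
    bA1, bA2, bAi1]
  rw [mul_right_inj, mul_right_inj, C, c13]
end

section
/- Let G be a group with generators A₁, …, A_{2g+2}, B, ρ subject to the relations: ρ = A₁⋯A_{2g+1}A_{2g+1}⋯A₁, B = A₁⋯A_{2g+1}, B A_i B^{-1} = A_{i+1 mod 2g+2}, far commutation and braid relations among the A_i, B^{2g+2} = 1, ρ² = 1, and ρ central. Then in the abelianization of G, the image of each A_i generates, and the abelianization is cyclic of order 4g+2 if g is even and 8g+4 if g is odd. -/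
/-- Generators: `Sum.inl i` is `A_i` (0-indexed, so `Sum.inl i` means `A_{i+1}`),
`Sum.inr (Sum.inl ())` is `B`, `Sum.inr (Sum.inr ())` is `ρ`. -/
abbrev hypGen (g : ℕ) := Fin (2 * g + 2) ⊕ Unit ⊕ Unit

def hypA (g : ℕ) (i : Fin (2 * g + 2)) : FreeGroup (hypGen g) := FreeGroup.of (Sum.inl i)

def hypB (g : ℕ) : FreeGroup (hypGen g) := FreeGroup.of (Sum.inr (Sum.inl ()))

def hypRho (g : ℕ) : FreeGroup (hypGen g) := FreeGroup.of (Sum.inr (Sum.inr ()))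

/-- The word `A₁ A₂ ⋯ A_{2g+1}` (0-indexed product of the first `2g+1` generators). -/
def hypProd (g : ℕ) : FreeGroup (hypGen g) :=
  ((List.ofFn fun i : Fin (2 * g + 1) => hypA g i.castSucc)).prod

/-- Defining relations of the hyperelliptic mapping class group presentation. -/
def hypRels (g : ℕ) : Set (FreeGroup (hypGen g)) :=
  {(hypRho g)⁻¹ * hypProd g * (List.ofFn fun i : Fin (2 * g + 1) => hypA g i.castSucc).reverse.prod} ∪
  {(hypB g)⁻¹ * hypProd g} ∪
  (Set.range fun i : Fin (2 * g + 2) =>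
    hypB g * hypA g i * (hypB g)⁻¹ * (hypA g (i + 1))⁻¹) ∪
  {w | ∃ i j : Fin (2 * g + 2), i ≠ j ∧ i ≠ j + 1 ∧ j ≠ i + 1 ∧
    w = hypA g i * hypA g j * (hypA g i)⁻¹ * (hypA g j)⁻¹} ∪
  (Set.range fun i : Fin (2 * g + 2) =>
    hypA g i * hypA g (i + 1) * hypA g i *
      ((hypA g (i + 1)) * hypA g i * hypA g (i + 1))⁻¹) ∪
  {(hypB g) ^ (2 * g + 2)} ∪
  {(hypRho g) ^ 2} ∪
  (Set.range fun i : Fin (2 * g + 2) =>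
    hypRho g * hypA g i * (hypRho g)⁻¹ * (hypA g i)⁻¹)

namespace Hyp

variable (g : ℕ)

def N : ℕ := if Even g then 4 * g + 2 else 8 * g + 4

instance : NeZero (N g) := ⟨by unfold N; split <;> omega⟩

abbrev K (g : ℕ) := Abelianization (PresentedGroup (hypRels g))

noncomputable def π : FreeGroup (hypGen g) →* K g :=
  (Abelianization.of : PresentedGroup (hypRels g) →* K g).comp (PresentedGroup.mk (hypRels g))

lemma π_rel {r : FreeGroup (hypGen g)} (hr : r ∈ hypRels g) : π g r = 1 := by
  have h : PresentedGroup.mk (hypRels g) r = 1 :=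
    (QuotientGroup.eq_one_iff r).mpr (Subgroup.subset_normalClosure hr)
  simp only [π, MonoidHom.comp_apply, h, map_one]

lemma a_succ (i : Fin (2 * g + 2)) : π g (hypA g (i + 1)) = π g (hypA g i) := by
  have h := π_rel g (r := hypB g * hypA g i * (hypB g)⁻¹ * (hypA g (i + 1))⁻¹)
    (by unfold hypRels; left; left; left; left; left; right; exact ⟨i, rfl⟩)
  simp only [map_mul, map_inv] at h
  have h2 : π g (hypB g) * π g (hypA g i) * (π g (hypB g))⁻¹ = π g (hypA g (i + 1)) :=
    mul_inv_eq_one.mp h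
  rw [← h2, mul_comm (π g (hypB g)) (π g (hypA g i)), mul_assoc, mul_inv_cancel, mul_one]

lemma a_eq (i : Fin (2 * g + 2)) : π g (hypA g i) = π g (hypA g 0) := by
  obtain ⟨k, hk⟩ := i
  induction k with
  | zero => congr 1
  | succ m ih =>
    have hm : m < 2 * g + 2 := by omega
    have : (⟨m + 1, hk⟩ : Fin (2 * g + 2)) = ⟨m, hm⟩ + 1 := by
      apply Fin.ext
      simp [Fin.add_def, Nat.mod_eq_of_lt hk, Nat.mod_eq_of_lt hm,
        Nat.mod_eq_of_lt (show (1 : ℕ) < 2 * g + 2 by omega)]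
    rw [this, a_succ, ih hm]

lemma π_prod : π g (hypProd g) = π g (hypA g 0) ^ (2 * g + 1) := by
  have hf : (fun i : Fin (2 * g + 1) => π g (hypA g i.castSucc)) =
      fun _ => π g (hypA g 0) := funext fun i => a_eq g _
  rw [hypProd, map_list_prod, List.map_ofFn]
  show (List.ofFn fun i : Fin (2 * g + 1) => π g (hypA g i.castSucc)).prod = _
  rw [hf, List.ofFn_const, List.prod_replicate]

lemma π_revprod :
    π g ((List.ofFn fun i : Fin (2 * g + 1) => hypA g i.castSucc).reverse.prod)
      = π g (hypA g 0) ^ (2 * g + 1) := by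
  have hf : (fun i : Fin (2 * g + 1) => π g (hypA g i.castSucc)) =
      fun _ => π g (hypA g 0) := funext fun i => a_eq g _
  rw [map_list_prod, List.map_reverse, List.prod_reverse, List.map_ofFn]
  show (List.ofFn fun i : Fin (2 * g + 1) => π g (hypA g i.castSucc)).prod = _
  rw [hf, List.ofFn_const, List.prod_replicate]

lemma π_B : π g (hypB g) = π g (hypA g 0) ^ (2 * g + 1) := by
  have h := π_rel g (r := (hypB g)⁻¹ * hypProd g)
    (by unfold hypRels; left; left; left; left; left; left; right; rfl)
  simp only [map_mul, map_inv] at h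
  have := inv_mul_eq_one.mp h
  rw [this, π_prod]

lemma π_rho : π g (hypRho g) = π g (hypA g 0) ^ (4 * g + 2) := by
  have h := π_rel g
    (r := (hypRho g)⁻¹ * hypProd g *
      (List.ofFn fun i : Fin (2 * g + 1) => hypA g i.castSucc).reverse.prod)
    (by unfold hypRels; left; left; left; left; left; left; left; rfl)
  simp only [map_mul, map_inv] at h
  rw [π_prod, π_revprod, mul_assoc, ← pow_add] at h
  have h2 : (π g (hypRho g))⁻¹ * π g (hypA g 0) ^ (4 * g + 2) = 1 := by
    rw [← h]; congr 2; omega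
  exact inv_mul_eq_one.mp h2

lemma pow_big : π g (hypA g 0) ^ ((2 * g + 1) * (2 * g + 2)) = 1 := by
  have h := π_rel g (r := hypB g ^ (2 * g + 2))
    (by unfold hypRels; left; left; right; rfl)
  rw [map_pow, π_B, ← pow_mul] at h
  exact h

lemma pow_8g4 : π g (hypA g 0) ^ (8 * g + 4) = 1 := by
  have h := π_rel g (r := hypRho g ^ 2)
    (by unfold hypRels; left; right; rfl)
  rw [map_pow, π_rho, ← pow_mul] at h
  rw [show 8 * g + 4 = (4 * g + 2) * 2 by omega]
  exact h

lemma pow_N : π g (hypA g 0) ^ (N g) = 1 := by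
  unfold N
  by_cases hg : Even g
  · obtain ⟨m, hm⟩ := hg
    rw [if_pos ⟨m, hm⟩]
    have key : (4 * g + 2) + (8 * g + 4) * m = (2 * g + 1) * (2 * g + 2) := by
      subst hm; ring
    have : π g (hypA g 0) ^ (4 * g + 2) * (π g (hypA g 0) ^ (8 * g + 4)) ^ m = 1 := by
      rw [← pow_mul, ← pow_add, key]; exact pow_big g
    rwa [pow_8g4, one_pow, mul_one] at this
  · rw [if_neg hg]; exact pow_8g4 g

noncomputable def fgen : hypGen g → Multiplicative (ZMod (N g)) :=
  fun x => Multiplicative.ofAdd (Sum.elim (fun _ => (1 : ZMod (N g)))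
    (Sum.elim (fun _ => ((2 * g + 1 : ℕ) : ZMod (N g)))
      (fun _ => ((4 * g + 2 : ℕ) : ZMod (N g)))) x)

lemma lift_prod : FreeGroup.lift (fgen g) (hypProd g)
    = Multiplicative.ofAdd ((2 * g + 1 : ℕ) : ZMod (N g)) := by
  have hf : (fun i : Fin (2 * g + 1) => FreeGroup.lift (fgen g) (hypA g i.castSucc)) =
      fun _ => Multiplicative.ofAdd (1 : ZMod (N g)) :=
    funext fun i => by simp [hypA, fgen]
  rw [hypProd, map_list_prod, List.map_ofFn]
  show (List.ofFn fun i : Fin (2 * g + 1) => FreeGroup.lift (fgen g) (hypA g i.castSucc)).prod = _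
  rw [hf, List.ofFn_const, List.prod_replicate, ← ofAdd_nsmul, nsmul_eq_mul, mul_one]

lemma lift_revprod : FreeGroup.lift (fgen g)
      ((List.ofFn fun i : Fin (2 * g + 1) => hypA g i.castSucc).reverse.prod)
    = Multiplicative.ofAdd ((2 * g + 1 : ℕ) : ZMod (N g)) := by
  have hf : (fun i : Fin (2 * g + 1) => FreeGroup.lift (fgen g) (hypA g i.castSucc)) =
      fun _ => Multiplicative.ofAdd (1 : ZMod (N g)) :=
    funext fun i => by simp [hypA, fgen]
  rw [map_list_prod, List.map_reverse, List.prod_reverse, List.map_ofFn]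
  show (List.ofFn fun i : Fin (2 * g + 1) => FreeGroup.lift (fgen g) (hypA g i.castSucc)).prod = _
  rw [hf, List.ofFn_const, List.prod_replicate, ← ofAdd_nsmul, nsmul_eq_mul, mul_one]

lemma dvd_six : (N g) ∣ (2 * g + 2) * (2 * g + 1) := by
  unfold N
  by_cases hg : Even g
  · obtain ⟨m, rfl⟩ := hg
    rw [if_pos ⟨m, rfl⟩]
    exact ⟨2 * m + 1, by ring⟩
  · rw [if_neg hg]
    obtain ⟨m, rfl⟩ := Nat.not_even_iff_odd.mp hg
    exact ⟨m + 1, by ring⟩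

lemma dvd_seven : (N g) ∣ 8 * g + 4 := by
  unfold N
  by_cases hg : Even g
  · rw [if_pos hg]; exact ⟨2, by ring⟩
  · rw [if_neg hg]

lemma rels_lift : ∀ r ∈ hypRels g, FreeGroup.lift (fgen g) r = 1 := by
  intro r hr
  rcases hr with (((((((h | h) | ⟨i, rfl⟩) | ⟨i, j, _, _, _, rfl⟩) | ⟨i, rfl⟩) | h) | h) | ⟨i, rfl⟩)
  · rw [Set.mem_singleton_iff] at h
    subst h
    rw [map_mul, map_mul, map_inv, lift_prod, lift_revprod]
    apply Multiplicative.toAdd.injective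
    simp only [hypRho, FreeGroup.lift_apply_of, fgen, Sum.elim_inr, toAdd_mul, toAdd_inv,
      toAdd_ofAdd, toAdd_one]
    push_cast
    ring
  · rw [Set.mem_singleton_iff] at h
    subst h
    rw [map_mul, map_inv, lift_prod]
    apply Multiplicative.toAdd.injective
    simp only [hypB, FreeGroup.lift_apply_of, fgen, Sum.elim_inr, Sum.elim_inl, toAdd_mul,
      toAdd_inv, toAdd_ofAdd, toAdd_one]
    ring
  · apply Multiplicative.toAdd.injective
    simp only [map_mul, map_inv, hypA, hypB, FreeGroup.lift_apply_of, fgen, Sum.elim_inl,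
      Sum.elim_inr, toAdd_mul, toAdd_inv, toAdd_ofAdd, toAdd_one]
    ring
  · apply Multiplicative.toAdd.injective
    simp only [map_mul, map_inv, hypA, FreeGroup.lift_apply_of, fgen, Sum.elim_inl, toAdd_mul,
      toAdd_inv, toAdd_ofAdd, toAdd_one]
    ring
  · apply Multiplicative.toAdd.injective
    simp only [map_mul, map_inv, hypA, FreeGroup.lift_apply_of, fgen, Sum.elim_inl, toAdd_mul,
      toAdd_inv, toAdd_ofAdd, toAdd_one]
    ring
  · rw [Set.mem_singleton_iff] at h
    subst h
    rw [map_pow]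
    apply Multiplicative.toAdd.injective
    simp only [hypB, FreeGroup.lift_apply_of, fgen, Sum.elim_inr, Sum.elim_inl, toAdd_pow,
      toAdd_ofAdd, toAdd_one]
    rw [nsmul_eq_mul, show ((2 * g + 2 : ℕ) : ZMod (N g)) * ((2 * g + 1 : ℕ) : ZMod (N g))
      = (((2 * g + 2) * (2 * g + 1) : ℕ) : ZMod (N g)) by push_cast; ring]
    exact (ZMod.natCast_eq_zero_iff _ _).mpr (dvd_six g)
  · rw [Set.mem_singleton_iff] at h
    subst h
    rw [map_pow]
    apply Multiplicative.toAdd.injective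
    simp only [hypRho, FreeGroup.lift_apply_of, fgen, Sum.elim_inr, toAdd_pow, toAdd_ofAdd, toAdd_one]
    rw [nsmul_eq_mul, show ((2 : ℕ) : ZMod (N g)) * ((4 * g + 2 : ℕ) : ZMod (N g))
      = (((8 * g + 4) : ℕ) : ZMod (N g)) by push_cast; ring]
    exact (ZMod.natCast_eq_zero_iff _ _).mpr (dvd_seven g)
  · apply Multiplicative.toAdd.injective
    simp only [map_mul, map_inv, hypA, hypRho, FreeGroup.lift_apply_of, fgen, Sum.elim_inl,
      Sum.elim_inr, toAdd_mul, toAdd_inv, toAdd_ofAdd, toAdd_one]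
    ring

noncomputable def ψ : K g →* Multiplicative (ZMod (N g)) :=
  Abelianization.lift (PresentedGroup.toGroup (rels_lift g))

lemma ψ_π (w : FreeGroup (hypGen g)) : ψ g (π g w) = FreeGroup.lift (fgen g) w := by
  simp only [ψ, π, MonoidHom.comp_apply, Abelianization.lift_apply_of]
  rfl

noncomputable def f0 : ℤ →+ Additive (K g) :=
  zmultiplesHom (Additive (K g)) (Additive.ofMul (π g (hypA g 0)))

lemma f0_N : f0 g ((N g : ℕ) : ℤ) = 0 := by
  apply Additive.toMul.injective
  rw [show f0 g ((N g : ℕ) : ℤ) = ((N g : ℕ) : ℤ) • Additive.ofMul (π g (hypA g 0)) from rfl,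
    toMul_zsmul]
  rw [show (Additive.ofMul (π g (hypA g 0))).toMul = π g (hypA g 0) from rfl]
  rw [zpow_natCast, pow_N]
  rfl

noncomputable def χ : Multiplicative (ZMod (N g)) →* K g :=
  AddMonoidHom.toMultiplicativeLeft (ZMod.lift (N g) ⟨f0 g, f0_N g⟩)

lemma χ_int (k : ℤ) : χ g (Multiplicative.ofAdd ((k : ZMod (N g)))) = π g (hypA g 0) ^ k := by
  simp only [χ, AddMonoidHom.coe_toMultiplicativeLeft, Function.comp_apply, toAdd_ofAdd,
    ZMod.lift_coe]
  rw [show (⟨f0 g, f0_N g⟩ : {f : ℤ →+ Additive (K g) // f ((N g : ℕ) : ℤ) = 0}).val k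
    = k • Additive.ofMul (π g (hypA g 0)) from rfl, toMul_zsmul]
  rfl

lemma left_inv : (χ g).comp (ψ g) = MonoidHom.id (K g) := by
  apply Abelianization.hom_ext
  apply PresentedGroup.ext
  intro x
  have key : ∀ x : hypGen g, (Abelianization.of (PresentedGroup.of (rels := hypRels g) x))
      = π g (FreeGroup.of x) := fun _ => rfl
  rcases x with i | u | u
  · show χ g (ψ g (π g (FreeGroup.of (Sum.inl i)))) = π g (FreeGroup.of (Sum.inl i))
    rw [ψ_π, FreeGroup.lift_apply_of]
    show χ g (Multiplicative.ofAdd (1 : ZMod (N g))) = _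
    rw [show (1 : ZMod (N g)) = ((1 : ℤ) : ZMod (N g)) by push_cast; ring, χ_int, zpow_one]
    exact (a_eq g i).symm
  · show χ g (ψ g (π g (FreeGroup.of (Sum.inr (Sum.inl u))))) = π g (FreeGroup.of (Sum.inr (Sum.inl u)))
    rw [ψ_π, FreeGroup.lift_apply_of]
    show χ g (Multiplicative.ofAdd ((2 * g + 1 : ℕ) : ZMod (N g))) = _
    rw [show ((2 * g + 1 : ℕ) : ZMod (N g)) = (((2 * g + 1 : ℕ) : ℤ) : ZMod (N g)) by push_cast; ring,
      χ_int, zpow_natCast]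
    exact (π_B g).symm
  · show χ g (ψ g (π g (FreeGroup.of (Sum.inr (Sum.inr u))))) = π g (FreeGroup.of (Sum.inr (Sum.inr u)))
    rw [ψ_π, FreeGroup.lift_apply_of]
    show χ g (Multiplicative.ofAdd ((4 * g + 2 : ℕ) : ZMod (N g))) = _
    rw [show ((4 * g + 2 : ℕ) : ZMod (N g)) = (((4 * g + 2 : ℕ) : ℤ) : ZMod (N g)) by push_cast; ring,
      χ_int, zpow_natCast]
    exact (π_rho g).symm

lemma ψ_a0 : ψ g (π g (hypA g 0)) = Multiplicative.ofAdd (1 : ZMod (N g)) := by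
  rw [ψ_π]
  simp [hypA, fgen]

lemma right_inv : (ψ g).comp (χ g) = MonoidHom.id (Multiplicative (ZMod (N g))) := by
  apply MonoidHom.ext
  intro x
  obtain ⟨k, hk⟩ := ZMod.intCast_surjective (Multiplicative.toAdd x)
  have hx : Multiplicative.ofAdd ((k : ZMod (N g))) = x := by rw [hk]; exact ofAdd_toAdd x
  rw [MonoidHom.comp_apply, ← hx, χ_int, map_zpow, ψ_a0, MonoidHom.id_apply, ← ofAdd_zsmul,
    zsmul_eq_mul, mul_one]

noncomputable def equiv : K g ≃* Multiplicative (ZMod (N g)) :=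
  MonoidHom.toMulEquiv (ψ g) (χ g) (left_inv g) (right_inv g)

lemma zpowers_top : Subgroup.zpowers (π g (hypA g 0)) = ⊤ := by
  have hli : ∀ a, χ g (ψ g a) = a := fun a => DFunLike.congr_fun (left_inv g) a
  have hinj : Function.Injective (ψ g) := Function.LeftInverse.injective hli
  rw [Subgroup.eq_top_iff']
  intro z
  rw [Subgroup.mem_zpowers_iff]
  set x : ZMod (N g) := Multiplicative.toAdd (ψ g z) with hx
  refine ⟨(x.val : ℤ), hinj ?_⟩
  rw [map_zpow, ψ_a0, ← ofAdd_zsmul, zsmul_eq_mul, mul_one]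
  have h1 : ((x.val : ℤ) : ZMod (N g)) = x := by
    push_cast
    exact ZMod.natCast_rightInverse x
  rw [h1, hx, ofAdd_toAdd]

end Hyp

theorem stmt_14 (g : ℕ) (hg : 2 ≤ g) :
    Nonempty (Abelianization (PresentedGroup (hypRels g)) ≃*
        Multiplicative (ZMod (if Even g then 4 * g + 2 else 8 * g + 4))) ∧
      ∀ i : Fin (2 * g + 2),
        Subgroup.zpowers
            (Abelianization.of (PresentedGroup.of (rels := hypRels g) (Sum.inl i))) = ⊤ := by
  constructor
  · exact ⟨Hyp.equiv g⟩
  · intro i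
    have key : (Abelianization.of (PresentedGroup.of (rels := hypRels g) (Sum.inl i)))
        = Hyp.π g (hypA g i) := rfl
    rw [key, Hyp.a_eq]
    exact Hyp.zpowers_top g
end
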